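/- Under the time-change formula hypothesis, for every integer h ≠ 0 and real x < 0: P(Θ_h ≤ x, Θ_0 = 1) = E[|Θ_{−h}|^α · 1{−1/Θ_{−h} ≤ x, Θ_{−h} > 0, Θ_0 = −1}]. -/

import Mathlib

open MeasureTheory

/-- Time-change formula for the spectral tail process, as a hypothesis. -/
def TimeChangeFormula {Ω : Type*} [MeasureSpace Ω] (μ : Measure Ω)
    (Θ : ℤ → Ω → ℝ) (α : ℝ) : Prop :=
  ∀ (s t i : ℤ), s ≤ 0 → 0 ≤ t →
    ∀ f : (ℤ → ℝ) → ℝ, Measurable f → (∃ C : ℝ, ∀ y, |f y| ≤ C) →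
      (∀ y y' : (ℤ → ℝ), (∀ j ∈ Set.Icc s t, y j = y' j) → f y = f y') →
      (∀ y : ℤ → ℝ, y 0 = 0 → f y = 0) →
      ∫ ω, f (fun j => Θ (j - i) ω) ∂μ
        = ∫ ω, f (fun j => Θ j ω / |Θ i ω|) * |Θ i ω| ^ α *
            (if Θ i ω ≠ 0 then 1 else 0) ∂μ

lemma aux_pointwise (α x : ℝ) (hx : x < 0) (a b : ℝ) (hb : b = 1 ∨ b = -1) :
    (if b / |a| ≤ x ∧ a / |a| = 1 then (1:ℝ) else 0) * |a| ^ α *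
      (if a ≠ 0 then (1:ℝ) else 0)
    = |a| ^ α * (if -1 / a ≤ x ∧ 0 < a ∧ b = -1 then (1:ℝ) else 0) := by
  rcases hb with hb | hb <;> subst hb
  · have h1 : ¬ ((1:ℝ) / |a| ≤ x ∧ a / |a| = 1) := by
      rintro ⟨h1, -⟩
      have : (0:ℝ) ≤ 1 / |a| := by positivity
      linarith
    have h2 : ¬ (-1 / a ≤ x ∧ 0 < a ∧ (1:ℝ) = -1) := by
      rintro ⟨-, -, h2⟩; norm_num at h2
    rw [if_neg h1, if_neg h2]
    ring
  · by_cases hap : 0 < a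
    · have habs : |a| = a := abs_of_pos hap
      have hane : a ≠ 0 := ne_of_gt hap
      rw [habs, div_self hane, if_pos hane]
      by_cases hcond : -1 / a ≤ x
      · rw [if_pos ⟨hcond, rfl⟩, if_pos ⟨hcond, hap, rfl⟩]; ring
      · rw [if_neg (by rintro ⟨h1, -⟩; exact hcond h1),
          if_neg (by rintro ⟨h1, -⟩; exact hcond h1)]
        ring
    · have h1 : ¬ ((-1:ℝ) / |a| ≤ x ∧ a / |a| = 1) := by
        rintro ⟨-, h1⟩
        rcases eq_or_lt_of_le (not_lt.mp hap) with he | hlt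
        · rw [he] at h1; norm_num at h1
        · rw [abs_of_neg hlt, div_neg, div_self (ne_of_lt hlt)] at h1
          norm_num at h1
      have h2 : ¬ (-1 / a ≤ x ∧ 0 < a ∧ (-1:ℝ) = -1) := by
        rintro ⟨-, h2, -⟩; exact hap h2
      rw [if_neg h1, if_neg h2]
      ring

theorem backward_representation_cond_neg
    {Ω : Type*} [MeasureSpace Ω] (μ : Measure Ω) [IsProbabilityMeasure μ]
    (Θ : ℤ → Ω → ℝ) (hmeas : ∀ t, Measurable (Θ t))
    (α : ℝ) (hα : 0 < α)
    (hΘ0 : ∀ᵐ ω ∂μ, Θ 0 ω = 1 ∨ Θ 0 ω = -1)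
    (hTC : TimeChangeFormula μ Θ α) :
    ∀ h : ℤ, h ≠ 0 → ∀ x : ℝ, x < 0 →
      (μ {ω | Θ h ω ≤ x ∧ Θ 0 ω = 1}).toReal
        = ∫ ω, |Θ (-h) ω| ^ α *
            (if -1 / Θ (-h) ω ≤ x ∧ 0 < Θ (-h) ω ∧ Θ 0 ω = -1 then 1 else 0) ∂μ := by
  intro h hh x hx
  set f : (ℤ → ℝ) → ℝ := fun y => if y 0 ≤ x ∧ y (-h) = 1 then 1 else 0 with hf
  have hmf : Measurable f := by
    have hs : MeasurableSet {y : ℤ → ℝ | y 0 ≤ x ∧ y (-h) = 1} := by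
      exact (measurableSet_le (measurable_pi_apply 0) measurable_const).inter
        ((measurable_pi_apply (-h)) (measurableSet_singleton 1))
    exact Measurable.ite hs measurable_const measurable_const
  have hbd : ∃ C : ℝ, ∀ y, |f y| ≤ C := by
    refine ⟨1, fun y => ?_⟩
    simp only [hf]
    split <;> simp
  have hcoord : ∀ y y' : (ℤ → ℝ),
      (∀ j ∈ Set.Icc (min (-h) 0) (max (-h) 0), y j = y' j) → f y = f y' := by
    intro y y' hyy'
    simp only [hf]
    rw [hyy' 0 (Set.mem_Icc.mpr ⟨min_le_right _ _, le_max_right _ _⟩),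
      hyy' (-h) (Set.mem_Icc.mpr ⟨min_le_left _ _, le_max_left _ _⟩)]
  have hv : ∀ y : ℤ → ℝ, y 0 = 0 → f y = 0 := by
    intro y hy0
    simp only [hf, hy0]
    rw [if_neg]
    rintro ⟨h1, -⟩
    exact absurd h1 (not_le.mpr hx)
  have key := hTC (min (-h) 0) (max (-h) 0) (-h) (min_le_right _ _) (le_max_right _ _)
    f hmf hbd hcoord hv
  have hL : (fun ω => f (fun j => Θ (j - (-h)) ω))
      = fun ω => if Θ h ω ≤ x ∧ Θ 0 ω = 1 then 1 else 0 := by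
    funext ω
    simp only [hf, sub_neg_eq_add, zero_add, neg_add_cancel]
  rw [hL] at key
  have hset : MeasurableSet {ω | Θ h ω ≤ x ∧ Θ 0 ω = 1} :=
    (measurableSet_le (hmeas h) measurable_const).inter ((hmeas 0) (measurableSet_singleton 1))
  have hmeq : (μ {ω | Θ h ω ≤ x ∧ Θ 0 ω = 1}).toReal
      = ∫ ω, (if Θ h ω ≤ x ∧ Θ 0 ω = 1 then 1 else 0) ∂μ := by
    change μ.real _ = _
    rw [← integral_indicator_one hset]
    congr 1
    funext ω
    simp [Set.indicator_apply, Set.mem_setOf_eq]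
  rw [hmeq, key]
  refine integral_congr_ae ?_
  filter_upwards [hΘ0] with ω hω
  simp only [hf]
  exact aux_pointwise α x hx (Θ (-h) ω) (Θ 0 ω) hω
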